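/- Let ρ_γ̄ = ν_j({x : φ(x) ≥ γ̄}) and let η = ν_j({x : φ^{(k)}(x) ∈ [γ(ν_j, ρ_γ̄, φ^{(k)}), γ(ν_j, ρ_γ̄, φ^{(k)}) + α]}), where α bounds |φ − φ^{(k)}| on supp(ν_j). If ρ_γ̄ > η, then there exists ρ > 0 such that γ(ν_j, ρ, φ^{(k)}) ≥ γ̄. -/
import Mathlib

open MeasureTheory

/-- The (1-ρ)-quantile of ψ under ν. -/
noncomputable def quantile {p : ℕ} (ν : Measure (Fin p → ℝ)) (ρ : ℝ)
    (ψ : (Fin p → ℝ) → ℝ) : ℝ :=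
  sSup {s : ℝ | (ν {x | ψ x < s}).toReal ≤ 1 - ρ}

private lemma toReal_compl' {p : ℕ} (ν : Measure (Fin p → ℝ)) [IsProbabilityMeasure ν]
    {s : Set (Fin p → ℝ)} (hs : MeasurableSet s) :
    (ν sᶜ).toReal = 1 - (ν s).toReal := by
  have h := prob_compl_eq_one_sub hs (μ := ν)
  rw [h, ENNReal.toReal_sub_of_le prob_le_one (by simp), ENNReal.toReal_one]

/-- Sufficient condition for quantile increase (Lemma, Appendix A): if
ρ_γ̄ = ν(φ ≥ γ̄) exceeds the probability η that the approximated score falls in the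
interval [γ(ν,ρ_γ̄,φ^{(k)}), γ(ν,ρ_γ̄,φ^{(k)}) + α], then there exists ρ > 0 with
γ(ν,ρ,φ^{(k)}) ≥ γ̄. -/
theorem stmt9 {p : ℕ} (ν : Measure (Fin p → ℝ)) [IsProbabilityMeasure ν]
    (φ φk : (Fin p → ℝ) → ℝ) (hφ : Measurable φ) (hφk : Measurable φk)
    (α : ℝ) (hα : 0 ≤ α)
    (herr : ∀ᵐ x ∂ν, |φ x - φk x| ≤ α)
    (γbar : ℝ)
    (ρbar : ℝ) (hρbar : ρbar = (ν {x | γbar ≤ φ x}).toReal)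
    (η : ℝ)
    (hη : η = (ν {x | φk x ∈ Set.Icc (quantile ν ρbar φk) (quantile ν ρbar φk + α)}).toReal)
    (hatt : ∀ ρ ∈ Set.Ioo (0 : ℝ) 1,
      IsGreatest {s : ℝ | (ν {x | φk x < s}).toReal ≤ 1 - ρ} (quantile ν ρ φk))
    (hlt : η < ρbar) :
    ∃ ρ > (0 : ℝ), γbar ≤ quantile ν ρ φk := by
  have hη0 : 0 ≤ η := by rw [hη]; exact ENNReal.toReal_nonneg
  have hρ0 : 0 < ρbar := lt_of_le_of_lt hη0 hlt
  have hρ1 : ρbar ≤ 1 := by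
    rw [hρbar]
    calc (ν {x | γbar ≤ φ x}).toReal ≤ (ν Set.univ).toReal :=
          ENNReal.toReal_mono (measure_ne_top ν _) (measure_mono (Set.subset_univ _))
      _ = 1 := by simp
  -- measurability of basic sets
  have hmlt : ∀ c : ℝ, MeasurableSet {x | φk x < c} := fun c =>
    measurableSet_lt hφk measurable_const
  have hmge : ∀ c : ℝ, MeasurableSet {x | c ≤ φk x} := fun c =>
    measurableSet_le measurable_const hφk
  have hmφ : MeasurableSet {x | γbar ≤ φ x} := measurableSet_le measurable_const hφ
  have hcompl : ∀ c : ℝ, {x | φk x < c}ᶜ = {x | c ≤ φk x} := by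
    intro c; ext x; simp [not_lt]
  suffices h : (ν {x | φk x < γbar}).toReal < 1 by
    set m := (ν {x | φk x < γbar}).toReal with hm
    have hm0 : (0:ℝ) ≤ m := ENNReal.toReal_nonneg
    refine ⟨(1 - m)/2, by linarith, ?_⟩
    exact (hatt ((1-m)/2) ⟨by linarith, by linarith⟩).2
      (by simp only [Set.mem_setOf_eq]; linarith)
  by_cases hcase : ρbar < 1
  · -- main case: ρbar ∈ (0,1), use hatt at ρbar
    set q := quantile ν ρbar φk with hq
    have hG := hatt ρbar ⟨hρ0, hcase⟩
    -- Step 1 : γbar - α ≤ q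
    have hsub : {x | φk x < γbar - α} ≤ᵐ[ν] {x | φ x < γbar} := by
      filter_upwards [herr] with x hx hmem
      have hmem' : φk x < γbar - α := hmem
      have h2 := abs_le.mp hx
      show φ x < γbar
      linarith
    have hcφ : (ν {x | φ x < γbar}).toReal = 1 - ρbar := by
      have : {x | γbar ≤ φ x}ᶜ = {x | φ x < γbar} := by ext x; simp [not_le]
      rw [← this, toReal_compl' ν hmφ, hρbar]
    have hstep1 : γbar - α ≤ q := by
      refine hG.2 ?_
      simp only [Set.mem_setOf_eq]
      rw [← hcφ]
      exact ENNReal.toReal_mono (measure_ne_top ν _) (measure_mono_ae hsub)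
    -- Step 2 : ρbar ≤ ν(q ≤ φk)
    have hstep2 : ρbar ≤ (ν {x | q ≤ φk x}).toReal := by
      have h1 : (ν {x | φk x < q}).toReal ≤ 1 - ρbar := hG.1
      have h2 : (ν {x | q ≤ φk x}).toReal = 1 - (ν {x | φk x < q}).toReal := by
        rw [← hcompl q, toReal_compl' ν (hmlt q)]
      linarith
    -- Step 3 : ν(q ≤ φk) ≤ η + ν(q + α < φk)
    have hstep3 : (ν {x | q ≤ φk x}).toReal ≤ η + (ν {x | q + α < φk x}).toReal := by
      have hsub2 : {x | q ≤ φk x} ⊆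
          {x | φk x ∈ Set.Icc q (q + α)} ∪ {x | q + α < φk x} := by
        intro x hx
        rcases le_or_gt (φk x) (q + α) with h' | h'
        · exact Or.inl ⟨hx, h'⟩
        · exact Or.inr h'
      calc (ν {x | q ≤ φk x}).toReal
          ≤ (ν ({x | φk x ∈ Set.Icc q (q + α)} ∪ {x | q + α < φk x})).toReal :=
            ENNReal.toReal_mono (measure_ne_top ν _) (measure_mono hsub2)
        _ ≤ (ν {x | φk x ∈ Set.Icc q (q + α)} + ν {x | q + α < φk x}).toReal :=
            ENNReal.toReal_mono (by finiteness) (measure_union_le _ _)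
        _ = η + (ν {x | q + α < φk x}).toReal := by
            rw [ENNReal.toReal_add (measure_ne_top ν _) (measure_ne_top ν _), hη]
    -- Step 4
    have hpos : ρbar - η ≤ (ν {x | q + α < φk x}).toReal := by linarith
    have hsub3 : {x | q + α < φk x} ⊆ {x | γbar ≤ φk x} := by
      intro x hx
      simp only [Set.mem_setOf_eq] at *
      linarith
    have hge : ρbar - η ≤ (ν {x | γbar ≤ φk x}).toReal :=
      le_trans hpos (ENNReal.toReal_mono (measure_ne_top ν _) (measure_mono hsub3))
    have hc2 : (ν {x | γbar ≤ φk x}).toReal = 1 - (ν {x | φk x < γbar}).toReal := by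
      rw [← hcompl γbar, toReal_compl' ν (hmlt γbar)]
    linarith
  · -- degenerate case ρbar = 1
    have hρeq : ρbar = 1 := le_antisymm hρ1 (not_lt.mp hcase)
    by_contra hcon
    have hle1 : (ν {x | φk x < γbar}).toReal ≤ 1 := by
      calc (ν {x | φk x < γbar}).toReal ≤ (ν Set.univ).toReal :=
            ENNReal.toReal_mono (measure_ne_top ν _) (measure_mono (Set.subset_univ _))
        _ = 1 := by simp
    have heq1 : (ν {x | φk x < γbar}).toReal = 1 := le_antisymm hle1 (not_lt.mp hcon)
    have hnull_ge : ν {x | γbar ≤ φk x} = 0 := by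
      have : (ν {x | γbar ≤ φk x}).toReal = 0 := by
        rw [← hcompl γbar, toReal_compl' ν (hmlt γbar)]; linarith
      exact (ENNReal.toReal_eq_zero_iff _).mp this |>.resolve_right (measure_ne_top ν _)
    have hnull_φ : ν {x | φ x < γbar} = 0 := by
      have h1 : (ν {x | φ x < γbar}).toReal = 1 - ρbar := by
        have : {x | γbar ≤ φ x}ᶜ = {x | φ x < γbar} := by ext x; simp [not_le]
        rw [← this, toReal_compl' ν hmφ, hρbar]
      rw [hρeq] at h1
      have := (ENNReal.toReal_eq_zero_iff (ν {x | φ x < γbar})).mp (by linarith)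
      exact this.resolve_right (measure_ne_top ν _)
    have hae1 : ∀ᵐ x ∂ν, γbar ≤ φ x := by
      rw [ae_iff]; simpa [not_le] using hnull_φ
    have hae2 : ∀ᵐ x ∂ν, φk x < γbar := by
      rw [ae_iff]; simpa [not_lt] using hnull_ge
    have hae3 : ∀ᵐ x ∂ν, γbar - α ≤ φk x := by
      filter_upwards [herr, hae1] with x hx h1
      have := abs_le.mp hx; linarith
    set S := {s : ℝ | (ν {x | φk x < s}).toReal ≤ 1 - ρbar} with hS
    have hmemS : γbar - α ∈ S := by
      have : ν {x | φk x < γbar - α} = 0 := by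
        have h := ae_iff.mp hae3
        have he : {x | φk x < γbar - α} = {x | ¬ (γbar - α ≤ φk x)} := by
          ext x; simp only [Set.mem_setOf_eq, not_le]
        rw [he]; exact h
      simp only [hS, Set.mem_setOf_eq, this, hρeq]
      simp
    have hbddS : ∀ s ∈ S, s ≤ γbar := by
      intro s hs
      by_contra hgt
      push_neg at hgt
      have h0 : ν {x | φk x < s} = 0 := by
        have := hs
        simp only [hS, Set.mem_setOf_eq, hρeq] at this
        have h' : (ν {x | φk x < s}).toReal = 0 :=
          le_antisymm (by linarith) ENNReal.toReal_nonneg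
        exact (ENNReal.toReal_eq_zero_iff _).mp h' |>.resolve_right (measure_ne_top ν _)
      have : ν {x | φk x < γbar} = 0 :=
        measure_mono_null (fun x hx => lt_trans hx hgt) h0
      rw [this] at heq1
      simp at heq1
    have hqdef : quantile ν ρbar φk = sSup S := rfl
    set q := quantile ν ρbar φk with hq
    have hSne : S.Nonempty := ⟨γbar - α, hmemS⟩
    have hSbdd : BddAbove S := ⟨γbar, hbddS⟩
    have hq1 : γbar - α ≤ q := le_csSup hSbdd hmemS
    have hnullq : ν {x | φk x < q} = 0 := by
      have hsub : {x | φk x < q} ⊆ ⋃ n : ℕ, {x | φk x < q - (n+1:ℝ)⁻¹} := by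
        intro x hx
        simp only [Set.mem_setOf_eq] at hx
        obtain ⟨n, hn⟩ := exists_nat_one_div_lt (sub_pos.mpr hx)
        refine Set.mem_iUnion.mpr ⟨n, ?_⟩
        simp only [Set.mem_setOf_eq]
        rw [one_div] at hn
        push_cast at hn ⊢
        linarith
      refine measure_mono_null hsub (measure_iUnion_null fun n => ?_)
      have hlt' : q - (n+1:ℝ)⁻¹ < q := by
        have : (0:ℝ) < (n+1:ℝ)⁻¹ := by positivity
        linarith
      obtain ⟨t, htS, htgt⟩ := exists_lt_of_lt_csSup hSne
        (show q - (n+1:ℝ)⁻¹ < sSup S from hlt')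
      have ht0 : ν {x | φk x < t} = 0 := by
        have := htS
        simp only [hS, Set.mem_setOf_eq, hρeq] at this
        have h' : (ν {x | φk x < t}).toReal = 0 :=
          le_antisymm (by linarith) ENNReal.toReal_nonneg
        exact (ENNReal.toReal_eq_zero_iff _).mp h' |>.resolve_right (measure_ne_top ν _)
      exact measure_mono_null (fun x hx => lt_trans hx htgt) ht0
    have haeq : ∀ᵐ x ∂ν, q ≤ φk x := by
      rw [ae_iff]; simpa [not_le] using hnullq
    have haeIcc : ∀ᵐ x ∂ν, φk x ∈ Set.Icc q (q + α) := by
      filter_upwards [haeq, hae2] with x h1 h2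
      exact ⟨h1, by linarith⟩
    have hIccmeas : MeasurableSet {x | φk x ∈ Set.Icc q (q + α)} :=
      hφk measurableSet_Icc
    have : ν {x | φk x ∈ Set.Icc q (q + α)}ᶜ = 0 := by
      rw [Set.compl_setOf]
      exact ae_iff.mp haeIcc
    have hη1 : η = 1 := by
      rw [hη]
      have h0 : (ν {x | φk x ∈ Set.Icc q (q + α)}ᶜ).toReal = 0 := by rw [this]; simp
      have h1 := toReal_compl' ν hIccmeas
      linarith
    rw [hη1, hρeq] at hlt
    exact lt_irrefl 1 hlt
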